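/- For every real δ > 0, the integral β′ = ∫₀^δ ϖ_l(z) dz, where ϖ_l(z) = (∫_{{ξ∈ℝ³ : ‖ξ‖≤δ, ξ₃≥z}} ‖ξ‖² dξ)/(∫_{{ξ∈ℝ³ : ‖ξ‖≤δ}} ‖ξ‖² dξ), equals 5δ/24. -/

import Mathlib

open MeasureTheory Real

lemma abs_le_of_sq (a b : ℝ) (hb : 0 ≤ b) (h : a ^ 2 ≤ b ^ 2) : |a| ≤ b := by
  nlinarith [abs_nonneg a, sq_abs a]

lemma norm_sq_eq3 (ξ : EuclideanSpace ℝ (Fin 3)) : ‖ξ‖ ^ 2 = ∑ i, ξ i ^ 2 := by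
  rw [EuclideanSpace.norm_eq, Real.sq_sqrt (Finset.sum_nonneg fun i _ => sq_nonneg _)]
  simp [sq_abs]

lemma norm_sq_eq2 (w : EuclideanSpace ℝ (Fin 2)) : ‖w‖ ^ 2 = ∑ i, w i ^ 2 := by
  rw [EuclideanSpace.norm_eq, Real.sq_sqrt (Finset.sum_nonneg fun i _ => sq_nonneg _)]
  simp [sq_abs]

lemma vol_disk : (volume (Metric.ball (0 : EuclideanSpace ℝ (Fin 2)) 1)).toReal = π := by
  rw [EuclideanSpace.volume_ball]
  have : Real.Gamma (1 + 1) = 1 := by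
    rw [show (1 + 1 : ℝ) = 2 by norm_num, Real.Gamma_two]
  simp [this, Real.sq_sqrt Real.pi_nonneg, ENNReal.toReal_ofReal Real.pi_nonneg]

lemma disk_int (R c : ℝ) (hR : 0 ≤ R) :
    ∫ y : EuclideanSpace ℝ (Fin 2),
      Set.indicator {y : EuclideanSpace ℝ (Fin 2) | ‖y‖ ≤ R} (fun y => ‖y‖ ^ 2 + c) y
      = π * R ^ 4 / 2 + π * c * R ^ 2 := by
  set g : ℝ → ℝ := Set.indicator (Set.Iic R) (fun ρ => ρ ^ 2 + c) with hg
  have h1 : ∀ y : EuclideanSpace ℝ (Fin 2),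
      Set.indicator {y : EuclideanSpace ℝ (Fin 2) | ‖y‖ ≤ R} (fun y => ‖y‖ ^ 2 + c) y
        = g ‖y‖ := by
    intro y
    by_cases h : ‖y‖ ≤ R <;>
      simp [hg, Set.indicator_apply, Set.mem_setOf_eq, Set.mem_Iic, h]
  simp_rw [h1]
  rw [MeasureTheory.integral_fun_norm_addHaar volume g]
  have hdim : Module.finrank ℝ (EuclideanSpace ℝ (Fin 2)) = 2 := by
    simp [finrank_euclideanSpace]
  rw [hdim, measureReal_def, vol_disk]
  have h2 : ∀ y : ℝ, y ^ (2 - 1) • g y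
      = Set.indicator (Set.Iic R) (fun y => y * (y ^ 2 + c)) y := by
    intro y
    by_cases h : y ≤ R <;>
      simp [hg, Set.indicator_apply, Set.mem_Iic, h, smul_eq_mul]
  simp_rw [h2]
  rw [MeasureTheory.setIntegral_indicator measurableSet_Iic, Set.Ioi_inter_Iic,
    ← intervalIntegral.integral_of_le hR]
  have h3 : ∀ y : ℝ, y * (y ^ 2 + c) = y ^ 3 + c * y := by intro y; ring
  simp_rw [h3]
  have key : ∫ y in (0:ℝ)..R, (y ^ 3 + c * y) = R ^ 4 / 4 + c * R ^ 2 / 2 := by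
    have : ∫ y in (0:ℝ)..R, (y ^ 3 + c * y)
        = (fun y => y ^ 4 / 4 + c * y ^ 2 / 2) R - (fun y => y ^ 4 / 4 + c * y ^ 2 / 2) 0 := by
      apply intervalIntegral.integral_eq_sub_of_hasDerivAt
      · intro y _
        have h := ((hasDerivAt_pow 4 y).div_const 4).add
          (((hasDerivAt_pow 2 y).const_mul c).div_const 2)
        convert h using 1
        · rfl
        push_cast; ring
      · exact (Continuous.intervalIntegrable (by continuity) _ _)
    rw [this]; ring
  rw [key, nsmul_eq_mul, smul_eq_mul]
  ring

lemma cap_int (δ z : ℝ) (hδ : 0 < δ) (hz' : -δ ≤ z) (hz : z ≤ δ) :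
    (∫ ξ in {ξ : EuclideanSpace ℝ (Fin 3) | ‖ξ‖ ≤ δ ∧ z ≤ ξ 2}, ‖ξ‖ ^ 2)
      = π / 2 * (δ ^ 4 * (δ - z) - (δ ^ 5 - z ^ 5) / 5) := by
  -- notation
  set Q : (Fin 2 → ℝ) → ℝ := fun y => ∑ j, y j ^ 2 with hQ
  have hQcont : Continuous Q := by
    exact continuous_finset_sum _ fun j _ => (continuous_apply j).pow 2
  have hQnn : ∀ y, 0 ≤ Q y := fun y => Finset.sum_nonneg fun j _ => sq_nonneg _
  -- the set in E3 is measurable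
  have hcont2 : Continuous fun ξ : EuclideanSpace ℝ (Fin 3) => ξ 2 :=
    (continuous_apply (2 : Fin 3)).comp (PiLp.continuous_ofLp 2 fun _ : Fin 3 => ℝ)
  have hsm : MeasurableSet {ξ : EuclideanSpace ℝ (Fin 3) | ‖ξ‖ ≤ δ ∧ z ≤ ξ 2} := by
    exact ((isClosed_le continuous_norm continuous_const).inter
      (isClosed_le continuous_const hcont2)).measurableSet
  rw [← MeasureTheory.integral_indicator hsm]
  -- transfer to pi space
  set F : (Fin 3 → ℝ) → ℝ :=
    Set.indicator {x : Fin 3 → ℝ | ∑ i, x i ^ 2 ≤ δ ^ 2 ∧ z ≤ x 2}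
      (fun x => ∑ i, x i ^ 2) with hF
  have hF1 : ∀ ξ : EuclideanSpace ℝ (Fin 3),
      Set.indicator {ξ : EuclideanSpace ℝ (Fin 3) | ‖ξ‖ ≤ δ ∧ z ≤ ξ 2} (fun ξ => ‖ξ‖ ^ 2) ξ
        = F ((MeasurableEquiv.toLp 2 (Fin 3 → ℝ)).symm ξ) := by
    intro ξ
    have hmemiff : ‖ξ‖ ≤ δ ↔ ∑ i, ξ i ^ 2 ≤ δ ^ 2 := by
      rw [← norm_sq_eq3]
      constructor
      · intro h; nlinarith [norm_nonneg ξ]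
      · intro h
        have := abs_le_of_sq ‖ξ‖ δ hδ.le h
        rwa [abs_of_nonneg (norm_nonneg ξ)] at this
    have happ : ∀ i, (MeasurableEquiv.toLp 2 (Fin 3 → ℝ)).symm ξ i = ξ i := fun _ => rfl
    simp only [hF, Set.indicator_apply, Set.mem_setOf_eq, happ]
    by_cases h : ‖ξ‖ ≤ δ ∧ z ≤ ξ 2
    · rw [if_pos h, if_pos ⟨hmemiff.1 h.1, h.2⟩, norm_sq_eq3]
    · rw [if_neg h, if_neg (fun hc => h ⟨hmemiff.2 hc.1, hc.2⟩)]
  simp_rw [hF1]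
  rw [(EuclideanSpace.volume_preserving_symm_measurableEquiv_toLp (Fin 3)).integral_comp
    (MeasurableEquiv.toLp 2 (Fin 3 → ℝ)).symm.measurableEmbedding F]
  -- split off coordinate 2
  set G : ℝ × (Fin 2 → ℝ) → ℝ :=
    Set.indicator {p : ℝ × (Fin 2 → ℝ) | p.1 ^ 2 + Q p.2 ≤ δ ^ 2 ∧ z ≤ p.1}
      (fun p => p.1 ^ 2 + Q p.2) with hG
  have hFG : ∀ p : ℝ × (Fin 2 → ℝ),
      F ((MeasurableEquiv.piFinSuccAbove (fun _ : Fin 3 => ℝ) 2).symm p) = G p := by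
    intro p
    have hsum : ∑ i, (((MeasurableEquiv.piFinSuccAbove (fun _ : Fin 3 => ℝ) 2).symm p) i) ^ 2
        = p.1 ^ 2 + Q p.2 := by
      rw [Fin.sum_univ_succAbove _ (2 : Fin 3)]
      simp [MeasurableEquiv.piFinSuccAbove_symm_apply, hQ]
    have h2 : ((MeasurableEquiv.piFinSuccAbove (fun _ : Fin 3 => ℝ) 2).symm p) 2 = p.1 := by
      simp [MeasurableEquiv.piFinSuccAbove_symm_apply]
    simp only [hF, hG, Set.indicator_apply, Set.mem_setOf_eq, hsum, h2]
  have hmp2 := (measurePreserving_piFinSuccAbove (fun _ : Fin 3 => (volume : Measure ℝ)) 2).symm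
  have key2 : ∫ x : Fin 3 → ℝ, F x
      = ∫ p : ℝ × (Fin 2 → ℝ), G p
          ∂((volume : Measure ℝ).prod (volume : Measure (Fin 2 → ℝ))) := by
    have h1 : (volume : Measure (Fin 3 → ℝ)) = Measure.pi fun _ => volume := volume_pi
    have h2 : (volume : Measure (Fin 2 → ℝ)) = Measure.pi fun _ => volume := volume_pi
    rw [h1, ← hmp2.integral_comp
      (MeasurableEquiv.piFinSuccAbove (fun _ : Fin 3 => ℝ) 2).symm.measurableEmbedding F]
    simp_rw [hFG]
    rw [h2]
  rw [key2]
  -- integrability of G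
  have hScl : IsClosed {p : ℝ × (Fin 2 → ℝ) | p.1 ^ 2 + Q p.2 ≤ δ ^ 2 ∧ z ≤ p.1} :=
    (isClosed_le ((continuous_fst.pow 2).add (hQcont.comp continuous_snd))
      continuous_const).inter (isClosed_le continuous_const continuous_fst)
  have hSsub : {p : ℝ × (Fin 2 → ℝ) | p.1 ^ 2 + Q p.2 ≤ δ ^ 2 ∧ z ≤ p.1}
      ⊆ Metric.closedBall 0 δ := by
    intro p hp
    obtain ⟨h1, -⟩ := hp
    rw [Metric.mem_closedBall, dist_zero_right, Prod.norm_def]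
    apply max_le
    · rw [Real.norm_eq_abs]
      exact abs_le_of_sq _ _ hδ.le (by nlinarith [hQnn p.2])
    · refine (pi_norm_le_iff_of_nonneg hδ.le).2 fun j => ?_
      rw [Real.norm_eq_abs]
      refine abs_le_of_sq _ _ hδ.le ?_
      have : p.2 j ^ 2 ≤ Q p.2 :=
        Finset.single_le_sum (f := fun j => p.2 j ^ 2) (fun i _ => sq_nonneg _)
          (Finset.mem_univ j)
      nlinarith [sq_nonneg p.1]
  have hScpt : IsCompact {p : ℝ × (Fin 2 → ℝ) | p.1 ^ 2 + Q p.2 ≤ δ ^ 2 ∧ z ≤ p.1} :=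
    Metric.isCompact_of_isClosed_isBounded hScl
      (Metric.isBounded_closedBall.subset hSsub)
  have hGint : Integrable G ((volume : Measure ℝ).prod (volume : Measure (Fin 2 → ℝ))) := by
    have h0 : (volume : Measure (ℝ × (Fin 2 → ℝ)))
        = (volume : Measure ℝ).prod (volume : Measure (Fin 2 → ℝ)) :=
      MeasureTheory.Measure.volume_eq_prod _ _
    rw [← h0, hG]
    exact (((continuous_fst.pow 2).add (hQcont.comp continuous_snd)).continuousOn.integrableOn_compact
      hScpt).integrable_indicator hScl.measurableSet
  rw [MeasureTheory.integral_prod G hGint]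
  -- inner integral
  have hinner : ∀ t : ℝ, (∫ y : Fin 2 → ℝ, G (t, y))
      = Set.indicator (Set.Icc z δ) (fun t => π / 2 * (δ ^ 4 - t ^ 4)) t := by
    intro t
    by_cases hzt : z ≤ t
    · by_cases htδ : t ≤ δ
      · -- main case
        set R : ℝ := Real.sqrt (δ ^ 2 - t ^ 2) with hR
        have hRsq : R ^ 2 = δ ^ 2 - t ^ 2 := Real.sq_sqrt (by nlinarith)
        have hGy : ∀ w : EuclideanSpace ℝ (Fin 2),
            G (t, (MeasurableEquiv.toLp 2 (Fin 2 → ℝ)).symm w)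
              = Set.indicator {w : EuclideanSpace ℝ (Fin 2) | ‖w‖ ≤ R}
                  (fun w => ‖w‖ ^ 2 + t ^ 2) w := by
          intro w
          have hQw : Q ((MeasurableEquiv.toLp 2 (Fin 2 → ℝ)).symm w) = ‖w‖ ^ 2 := by
            rw [norm_sq_eq2]; rfl
          have hiff : ‖w‖ ≤ R ↔ t ^ 2 + ‖w‖ ^ 2 ≤ δ ^ 2 := by
            constructor
            · intro h
              have h2 : ‖w‖ ^ 2 ≤ R ^ 2 := by nlinarith [norm_nonneg w, Real.sqrt_nonneg (δ ^ 2 - t ^ 2)]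
              nlinarith
            · intro h
              have : ‖w‖ ^ 2 ≤ R ^ 2 := by nlinarith
              have := abs_le_of_sq _ _ (Real.sqrt_nonneg _) this
              rwa [abs_of_nonneg (norm_nonneg w)] at this
          simp only [hG, Set.indicator_apply, Set.mem_setOf_eq, hQw]
          by_cases h : ‖w‖ ≤ R
          · rw [if_pos ⟨(by nlinarith [hiff.1 h]), hzt⟩, if_pos h]; ring
          · rw [if_neg, if_neg h]
            intro hc
            exact h (hiff.2 (by linarith [hc.1]))
        calc (∫ y : Fin 2 → ℝ, G (t, y))
            = ∫ w : EuclideanSpace ℝ (Fin 2),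
                G (t, (MeasurableEquiv.toLp 2 (Fin 2 → ℝ)).symm w) := by
              rw [(EuclideanSpace.volume_preserving_symm_measurableEquiv_toLp (Fin 2)).integral_comp
                (MeasurableEquiv.toLp 2 (Fin 2 → ℝ)).symm.measurableEmbedding
                (fun y => G (t, y))]
          _ = ∫ w : EuclideanSpace ℝ (Fin 2),
                Set.indicator {w : EuclideanSpace ℝ (Fin 2) | ‖w‖ ≤ R}
                  (fun w => ‖w‖ ^ 2 + t ^ 2) w := by simp_rw [hGy]
          _ = π * R ^ 4 / 2 + π * t ^ 2 * R ^ 2 := disk_int R (t ^ 2) (Real.sqrt_nonneg _)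
          _ = Set.indicator (Set.Icc z δ) (fun t => π / 2 * (δ ^ 4 - t ^ 4)) t := by
              rw [Set.indicator_of_mem (Set.mem_Icc.2 ⟨hzt, htδ⟩)]
              have : R ^ 4 = (δ ^ 2 - t ^ 2) ^ 2 := by rw [show R ^ 4 = (R ^ 2) ^ 2 by ring, hRsq]
              rw [this, hRsq]; ring
      · -- t > δ : empty
        have hGy : ∀ y : Fin 2 → ℝ, G (t, y) = 0 := by
          intro y
          rw [hG, Set.indicator_of_notMem]
          intro hc
          have := hQnn y
          have h1 : t ^ 2 + Q y ≤ δ ^ 2 := hc.1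
          nlinarith
        simp only [hGy, integral_zero]
        rw [Set.indicator_of_notMem (by simp [Set.mem_Icc]; intro h; linarith)]
    · -- t < z : empty
      have hGy : ∀ y : Fin 2 → ℝ, G (t, y) = 0 := by
        intro y
        rw [hG, Set.indicator_of_notMem]
        intro hc
        exact hzt hc.2
      simp only [hGy, integral_zero]
      rw [Set.indicator_of_notMem (by simp [Set.mem_Icc]; intro h; exact absurd h hzt)]
  simp_rw [hinner]
  -- outer integral
  rw [MeasureTheory.integral_indicator measurableSet_Icc,
    MeasureTheory.integral_Icc_eq_integral_Ioc, ← intervalIntegral.integral_of_le hz]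
  have : ∫ t in z..δ, π / 2 * (δ ^ 4 - t ^ 4)
      = (fun t => π / 2 * (δ ^ 4 * t - t ^ 5 / 5)) δ
        - (fun t => π / 2 * (δ ^ 4 * t - t ^ 5 / 5)) z := by
    refine intervalIntegral.integral_eq_sub_of_hasDerivAt (f := fun t => π / 2 * (δ ^ 4 * t - t ^ 5 / 5)) ?_ ?_
    · intro t _
      have h := (((hasDerivAt_id t).const_mul (δ ^ 4)).sub
        ((hasDerivAt_pow 5 t).div_const 5)).const_mul (π / 2)
      convert h using 1
      · rfl
      · rfl
      push_cast; ring
    · exact (Continuous.intervalIntegrable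
        (continuous_const.mul (continuous_const.sub (continuous_pow 4))) _ _)
  rw [this]
  ring

theorem beta_prime_3d (δ : ℝ) (hδ : 0 < δ) :
    (∫ z in (0:ℝ)..δ,
      (∫ ξ in {ξ : EuclideanSpace ℝ (Fin 3) | ‖ξ‖ ≤ δ ∧ z ≤ ξ 2}, ‖ξ‖ ^ 2) /
        (∫ ξ in {ξ : EuclideanSpace ℝ (Fin 3) | ‖ξ‖ ≤ δ}, ‖ξ‖ ^ 2))
      = 5 * δ / 24 := by
  have hden : (∫ ξ in {ξ : EuclideanSpace ℝ (Fin 3) | ‖ξ‖ ≤ δ}, ‖ξ‖ ^ 2)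
      = 4 * π * δ ^ 5 / 5 := by
    have hset : {ξ : EuclideanSpace ℝ (Fin 3) | ‖ξ‖ ≤ δ}
        = {ξ : EuclideanSpace ℝ (Fin 3) | ‖ξ‖ ≤ δ ∧ -δ ≤ ξ 2} := by
      ext ξ
      simp only [Set.mem_setOf_eq]
      refine ⟨fun h => ⟨h, ?_⟩, fun h => h.1⟩
      have h2 : ξ 2 ^ 2 ≤ ‖ξ‖ ^ 2 := by
        rw [norm_sq_eq3]
        exact Finset.single_le_sum (f := fun i => ξ i ^ 2) (fun i _ => sq_nonneg _)
          (Finset.mem_univ 2)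
      have h3 : |ξ 2| ≤ δ := by
        refine abs_le_of_sq _ _ hδ.le ?_
        nlinarith [norm_nonneg ξ]
      linarith [neg_abs_le (ξ 2)]
    rw [hset, cap_int δ (-δ) hδ (by linarith) (by linarith)]
    ring
  have hcong : Set.EqOn
      (fun z => (∫ ξ in {ξ : EuclideanSpace ℝ (Fin 3) | ‖ξ‖ ≤ δ ∧ z ≤ ξ 2}, ‖ξ‖ ^ 2) /
        (∫ ξ in {ξ : EuclideanSpace ℝ (Fin 3) | ‖ξ‖ ≤ δ}, ‖ξ‖ ^ 2))
      (fun z => (π / 2 * (δ ^ 4 * (δ - z) - (δ ^ 5 - z ^ 5) / 5)) / (4 * π * δ ^ 5 / 5))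
      (Set.uIcc 0 δ) := by
    intro z hzmem
    rw [Set.uIcc_of_le hδ.le] at hzmem
    obtain ⟨h0, h1⟩ := hzmem
    simp only
    rw [hden, cap_int δ z hδ (by linarith) h1]
  rw [intervalIntegral.integral_congr hcong]
  have key : ∫ z in (0:ℝ)..δ,
      (π / 2 * (δ ^ 4 * (δ - z) - (δ ^ 5 - z ^ 5) / 5)) / (4 * π * δ ^ 5 / 5)
      = (fun z => (π / 2 * (δ ^ 5 * z - δ ^ 4 * z ^ 2 / 2 - (δ ^ 5 * z - z ^ 6 / 6) / 5))
          / (4 * π * δ ^ 5 / 5)) δ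
        - (fun z => (π / 2 * (δ ^ 5 * z - δ ^ 4 * z ^ 2 / 2 - (δ ^ 5 * z - z ^ 6 / 6) / 5))
          / (4 * π * δ ^ 5 / 5)) 0 := by
    refine intervalIntegral.integral_eq_sub_of_hasDerivAt
      (f := fun z => (π / 2 * (δ ^ 5 * z - δ ^ 4 * z ^ 2 / 2 - (δ ^ 5 * z - z ^ 6 / 6) / 5))
        / (4 * π * δ ^ 5 / 5)) ?_ ?_
    · intro z _
      have h := (((((hasDerivAt_id z).const_mul (δ ^ 5)).sub
          (((hasDerivAt_pow 2 z).const_mul (δ ^ 4)).div_const 2)).sub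
          ((((hasDerivAt_id z).const_mul (δ ^ 5)).sub
            ((hasDerivAt_pow 6 z).div_const 6)).div_const 5)).const_mul
          (π / 2)).div_const (4 * π * δ ^ 5 / 5)
      convert h using 1
      · rfl
      · rfl
      push_cast; ring
    · exact Continuous.intervalIntegrable (by fun_prop) _ _
  rw [key]
  have hπ : π ≠ 0 := pi_ne_zero
  have hδ' : δ ≠ 0 := hδ.ne'
  field_simp
  ring
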